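/- For any Vecchia approximation f̂ of f with conditioning vectors g(i), the expected negative log-density satisfies −2 E[log f̂(x)] = ∑_{i=1}^N log Var(x_i | x_{g(i)}) + N + N·log(2π), where Var(x_i | x_{g(i)}) denotes the (constant) conditional variance of x_i given x_{g(i)} and the expectation is taken under the true law f of x. -/

import Mathlib

open MeasureTheory Real Finset Matrix

noncomputable section

/-- Density of the one-dimensional normal distribution `N(μ, v)` evaluated at `t`. -/
def gauss1 (μ v t : ℝ) : ℝ :=
  (Real.sqrt (2 * π * v))⁻¹ * Real.exp (-((t - μ) ^ 2) / (2 * v))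

variable {ι : Type*} [Fintype ι] [DecidableEq ι]

/-- Joint density of the multivariate normal distribution `N(μ, K)` on `ι → ℝ`. -/
def gaussDensity (μ : ι → ℝ) (K : Matrix ι ι ℝ) (x : ι → ℝ) : ℝ :=
  (Real.sqrt ((2 * π) ^ (Fintype.card ι) * K.det))⁻¹ *
    Real.exp (-(dotProduct (x - μ) (K⁻¹ *ᵥ (x - μ))) / 2)

/-- Submatrix of `K` with rows and columns in the index set `G`. -/
def subm (K : Matrix ι ι ℝ) (G : Finset ι) : Matrix G G ℝ :=
  Matrix.of fun j k => K j.1 k.1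

/-- Gaussian conditional mean `E(x i | x_G)` for `x ~ N(μ, K)`, as a function of `x`. -/
def condMean (μ : ι → ℝ) (K : Matrix ι ι ℝ) (i : ι) (G : Finset ι) (x : ι → ℝ) : ℝ :=
  μ i + dotProduct (fun j : G => K i j.1)
    ((subm K G)⁻¹ *ᵥ fun j : G => x j.1 - μ j.1)

/-- Gaussian conditional variance `Var(x i | x_G)` for `x ~ N(μ, K)`
(it does not depend on the value of `x_G`). -/
def condVar (K : Matrix ι ι ℝ) (i : ι) (G : Finset ι) : ℝ :=
  K i i - dotProduct (fun j : G => K i j.1)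
    ((subm K G)⁻¹ *ᵥ fun j : G => K j.1 i)

/-- Gaussian conditional covariance `Cov(x a, x b | x_G)` for `x ~ N(0, K)`. -/
def condCov (K : Matrix ι ι ℝ) (a b : ι) (G : Finset ι) : ℝ :=
  K a b - dotProduct (fun j : G => K a j.1)
    ((subm K G)⁻¹ *ᵥ fun j : G => K j.1 b)

/-- The exact Gaussian conditional density `f(x i | x_G)` for `x ~ N(μ, K)`. -/
def condDens (μ : ι → ℝ) (K : Matrix ι ι ℝ) (i : ι) (G : Finset ι) (x : ι → ℝ) : ℝ :=
  gauss1 (condMean μ K i G x) (condVar K i G) (x i)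

/-- The general Vecchia approximation `f̂(x) = ∏ i, f(x i | x_{g i})` of `N(μ, K)`. -/
def vecchia (μ : ι → ℝ) (K : Matrix ι ι ℝ) (g : ι → Finset ι) (x : ι → ℝ) : ℝ :=
  ∏ i, condDens μ K i (g i) x

/-- Kullback–Leibler divergence `KL(f ‖ g) = ∫ f log(f/g)` between densities on `ι → ℝ`. -/
def KLdiv (f g : (ι → ℝ) → ℝ) : ℝ :=
  ∫ x : ι → ℝ, f x * Real.log (f x / g x)



set_option linter.unusedSectionVars false
set_option linter.unusedVariables false

section VGaux

lemma int_g : ∫ x : ℝ, Real.exp (-x^2/2) = Real.sqrt (2*π) := by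
  have := integral_gaussian (1/2 : ℝ)
  rw [show π / (1/2) = 2*π by ring] at this
  rw [← this]
  congr 1 with x
  congr 1
  ring

lemma integrable_g : Integrable (fun x : ℝ => Real.exp (-x^2/2)) := by
  have := integrable_exp_neg_mul_sq (by norm_num : (0:ℝ) < 1/2)
  refine this.congr ?_
  filter_upwards with x
  congr 1; ring

lemma integrable_xg : Integrable (fun x : ℝ => x * Real.exp (-x^2/2)) := by
  have := integrable_mul_exp_neg_mul_sq (by norm_num : (0:ℝ) < 1/2)
  refine this.congr ?_
  filter_upwards with x
  congr 2; ring

lemma integrable_x2g : Integrable (fun x : ℝ => x^2 * Real.exp (-x^2/2)) := by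
  have := integrable_rpow_mul_exp_neg_mul_sq (by norm_num : (0:ℝ) < 1/2) (s := 2) (by norm_num)
  have h2 : ∀ x : ℝ, x ^ (2:ℝ) = x ^ (2:ℕ) := fun x => by
    rw [show (2:ℝ) = ((2:ℕ):ℝ) by norm_num, Real.rpow_natCast]
  simp only [h2] at this
  refine this.congr ?_
  filter_upwards with x
  congr 2; ring

lemma int_xg : ∫ x : ℝ, x * Real.exp (-x^2/2) = 0 := by
  have h := MeasureTheory.integral_neg_eq_self (fun x : ℝ => x * Real.exp (-x^2/2)) volume
  simp only [neg_sq, neg_mul] at h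
  have h2 : ∫ x : ℝ, -(x * Real.exp (-x^2/2)) = - ∫ x : ℝ, x * Real.exp (-x^2/2) :=
    integral_neg _
  rw [h2] at h
  linarith

lemma int_x2g : ∫ x : ℝ, x^2 * Real.exp (-x^2/2) = Real.sqrt (2*π) := by
  have hd : ∀ x : ℝ, HasDerivAt (fun x : ℝ => x * Real.exp (-x^2/2))
      (Real.exp (-x^2/2) - x^2 * Real.exp (-x^2/2)) x := by
    intro x
    have h1 : HasDerivAt (fun x : ℝ => -x^2/2) (-x) x := by
      have := ((hasDerivAt_pow 2 x).neg).div_const 2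
      refine this.congr_deriv ?_
      push_cast; ring
    have h2 := h1.exp
    have := (hasDerivAt_id x).mul h2
    refine this.congr_deriv ?_
    simp only [id]
    ring
  have hint : Integrable (fun x : ℝ => Real.exp (-x^2/2) - x^2 * Real.exp (-x^2/2)) :=
    integrable_g.sub integrable_x2g
  have h0 := integral_eq_zero_of_hasDerivAt_of_integrable hd hint integrable_xg
  rw [integral_sub integrable_g integrable_x2g, int_g] at h0
  linarith


noncomputable def phi (t : ℝ) : ℝ := (Real.sqrt (2*π))⁻¹ * Real.exp (-t^2/2)

lemma sqrt2pi_pos : 0 < Real.sqrt (2*π) := Real.sqrt_pos.2 (by positivity)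

lemma int_phi : ∫ t : ℝ, phi t = 1 := by
  unfold phi
  rw [integral_const_mul, int_g, inv_mul_cancel₀ sqrt2pi_pos.ne']

lemma integrable_phi : Integrable phi := integrable_g.const_mul _

lemma int_tphi : ∫ t : ℝ, phi t * t = 0 := by
  unfold phi
  simp_rw [mul_assoc, mul_comm (Real.exp _)]
  rw [integral_const_mul, int_xg, mul_zero]

lemma integrable_tphi : Integrable (fun t => phi t * t) := by
  unfold phi
  simp_rw [mul_assoc, mul_comm (Real.exp _)]
  exact integrable_xg.const_mul _

lemma int_t2phi : ∫ t : ℝ, phi t * (t * t) = 1 := by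
  unfold phi
  simp_rw [mul_assoc, mul_comm (Real.exp _), ← sq]
  rw [integral_const_mul, int_x2g, inv_mul_cancel₀ sqrt2pi_pos.ne']

lemma integrable_t2phi : Integrable (fun t => phi t * (t * t)) := by
  unfold phi
  simp_rw [mul_assoc, mul_comm (Real.exp _), ← sq]
  exact integrable_x2g.const_mul _

noncomputable def Phi {N : ℕ} (y : Fin N → ℝ) : ℝ := ∏ j, phi (y j)

lemma integrable_Phi {N : ℕ} : Integrable (Phi (N := N)) :=
  Integrable.fintype_prod (fun _ => integrable_phi)

lemma int_Phi {N : ℕ} : ∫ y : Fin N → ℝ, Phi y = 1 := by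
  unfold Phi
  rw [integral_fintype_prod_volume_eq_prod]
  simp [int_phi]

-- component second moments
noncomputable def hfun {N : ℕ} (a b : Fin N) (j : Fin N) (t : ℝ) : ℝ :=
  phi t * ((if j = a then t else 1) * (if j = b then t else 1))

lemma hfun_key {N : ℕ} (a b : Fin N) :
    (fun y : Fin N → ℝ => Phi y * (y a * y b)) = fun y => ∏ j, hfun a b j (y j) := by
  funext y
  simp only [Phi, hfun]
  rw [Finset.prod_mul_distrib, Finset.prod_mul_distrib]
  congr 1
  rw [Finset.prod_ite_eq' Finset.univ a (fun j => y j), Finset.prod_ite_eq' Finset.univ b]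
  simp

lemma integrable_Phi_ab {N : ℕ} (a b : Fin N) :
    Integrable (fun y : Fin N → ℝ => Phi y * (y a * y b)) := by
  rw [hfun_key a b]
  apply Integrable.fintype_prod
  intro j
  unfold hfun
  by_cases ha : j = a <;> by_cases hb : j = b <;>
    simp only [ha, hb, ite_true, ite_false] <;>
    simp_all [integrable_t2phi, integrable_tphi, integrable_phi, mul_one, one_mul]
lemma int_Phi_ab {N : ℕ} (a b : Fin N) :
    ∫ y : Fin N → ℝ, Phi y * (y a * y b) = if a = b then 1 else 0 := by
  rw [hfun_key a b, integral_fintype_prod_volume_eq_prod]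
  by_cases hab : a = b
  · subst hab
    rw [if_pos rfl]
    apply Finset.prod_eq_one
    intro j _
    unfold hfun
    by_cases ha : j = a
    · subst ha; simpa using int_t2phi
    · simpa [ha] using int_phi
  · rw [if_neg hab]
    apply Finset.prod_eq_zero (Finset.mem_univ a)
    unfold hfun
    simpa [hab] using int_tphi


lemma sq_dot_expand {N : ℕ} (d : Fin N → ℝ) (y : Fin N → ℝ) :
    Phi y * (d ⬝ᵥ y)^2 = ∑ a, ∑ b, (d a * d b) * (Phi y * (y a * y b)) := by
  simp only [dotProduct, sq]
  rw [Finset.sum_mul_sum, Finset.mul_sum]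
  refine Finset.sum_congr rfl fun a _ => ?_
  rw [Finset.mul_sum]
  refine Finset.sum_congr rfl fun b _ => by ring

lemma integrable_Phi_sq_dot {N : ℕ} (d : Fin N → ℝ) :
    Integrable (fun y : Fin N → ℝ => Phi y * (d ⬝ᵥ y)^2) := by
  simp only [sq_dot_expand]
  exact integrable_finset_sum _ fun a _ =>
    integrable_finset_sum _ fun b _ => (integrable_Phi_ab a b).const_mul _

lemma int_Phi_sq_dot {N : ℕ} (d : Fin N → ℝ) :
    ∫ y : Fin N → ℝ, Phi y * (d ⬝ᵥ y)^2 = d ⬝ᵥ d := by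
  simp only [sq_dot_expand]
  rw [integral_finset_sum _ fun a _ =>
    integrable_finset_sum _ fun b _ => (integrable_Phi_ab a b).const_mul _]
  have : ∀ a : Fin N, ∫ y : Fin N → ℝ, ∑ b, (d a * d b) * (Phi y * (y a * y b)) =
      ∑ b, (d a * d b) * ∫ y : Fin N → ℝ, Phi y * (y a * y b) := by
    intro a
    rw [integral_finset_sum _ fun b _ => (integrable_Phi_ab a b).const_mul _]
    exact Finset.sum_congr rfl fun b _ => integral_const_mul _ _
  simp only [this, int_Phi_ab]
  simp [dotProduct, Finset.mul_sum, mul_comm]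

-- change of variables
lemma integral_comp_affine {N : ℕ} {S : Matrix (Fin N) (Fin N) ℝ} (hS : S.det ≠ 0)
    (μ : Fin N → ℝ) {f : (Fin N → ℝ) → ℝ} (hf : Measurable f) :
    ∫ x, f x = |S.det| * ∫ y, f (μ + S *ᵥ y) := by
  have hmap := Real.map_matrix_volume_pi_eq_smul_volume_pi hS
  have h1 : ∫ y, f (μ + S *ᵥ y) =
      ∫ z, f (μ + z) ∂(Measure.map (Matrix.toLin' S) volume) := by
    rw [integral_map (Matrix.toLin' S).continuous_of_finiteDimensional.measurable.aemeasurable]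
    · simp [Matrix.toLin'_apply]
    · exact (hf.comp (measurable_const_add _)).aestronglyMeasurable
  rw [h1, hmap, integral_smul_measure]
  have h2 : ∫ z : Fin N → ℝ, f (μ + z) = ∫ x, f x := integral_add_left_eq_self f μ
  rw [h2, ENNReal.toReal_ofReal (by positivity)]
  rw [abs_inv]
  rw [smul_eq_mul, ← mul_assoc, mul_inv_cancel₀ (abs_pos.2 hS).ne', one_mul]



def ext0 {G : Finset ι} (z : G → ℝ) : ι → ℝ :=
  fun j => if h : j ∈ G then z ⟨j, h⟩ else 0

lemma sum_ext0_mul {G : Finset ι} (z : G → ℝ) (f : ι → ℝ) :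
    ∑ j, ext0 z j * f j = ∑ j : G, z j * f j.1 := by
  rw [Finset.univ_eq_attach,
    show (∑ j : ι, ext0 z j * f j) = ∑ j ∈ G, ext0 z j * f j from
      (Finset.sum_subset (Finset.subset_univ G) (fun x _ hx => by simp [ext0, hx])).symm,
    ← Finset.sum_attach G (fun j => ext0 z j * f j)]
  refine Finset.sum_congr rfl fun j _ => ?_
  simp [ext0, j.2]

lemma ext0_dot {G : Finset ι} (z : G → ℝ) (f : ι → ℝ) :
    ext0 z ⬝ᵥ f = z ⬝ᵥ (fun j : G => f j.1) := by
  simpa [dotProduct] using sum_ext0_mul z f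

lemma dot_ext0 {G : Finset ι} (z : G → ℝ) (f : ι → ℝ) :
    f ⬝ᵥ ext0 z = (fun j : G => f j.1) ⬝ᵥ z := by
  rw [dotProduct_comm, ext0_dot, dotProduct_comm]

lemma mulVec_ext0 {K : Matrix ι ι ℝ} {G : Finset ι} (z : G → ℝ) (j : ι) :
    (K *ᵥ ext0 z) j = (fun k : G => K j k.1) ⬝ᵥ z := by
  show (fun k => K j k) ⬝ᵥ ext0 z = _
  rw [dot_ext0]

section posdef
variable {K : Matrix ι ι ℝ} (hK : K.PosDef)

lemma Ksym (hK : K.PosDef) : ∀ a b, K a b = K b a := by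
  intro a b
  have h := hK.1
  have := congrArg (fun M => M a b) h.eq
  simpa [Matrix.conjTranspose_apply] using this.symm

lemma subm_herm (hK : K.PosDef) (G : Finset ι) : (subm K G).IsHermitian := by
  ext j k
  simp only [Matrix.conjTranspose_apply, subm, Matrix.of_apply, star_trivial]
  exact Ksym hK k.1 j.1

lemma subm_posDef (hK : K.PosDef) (G : Finset ι) : (subm K G).PosDef := by
  refine Matrix.PosDef.of_dotProduct_mulVec_pos (subm_herm hK G) fun z hz => ?_
  have hz' : ext0 z ≠ 0 := by
    intro h
    apply hz
    funext j
    have := congrFun h j.1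
    simpa [ext0, j.2] using this
  have hpos := hK.dotProduct_mulVec_pos hz'
  simp only [star_trivial] at hpos ⊢
  convert hpos using 1
  rw [ext0_dot]
  congr 1
  funext j
  rw [mulVec_ext0]
  rfl

lemma subm_det_ne (hK : K.PosDef) (G : Finset ι) : (subm K G).det ≠ 0 :=
  (subm_posDef hK G).det_pos.ne'

lemma subm_inv_symm (hK : K.PosDef) (G : Finset ι) : (subm K G)⁻¹ᵀ = (subm K G)⁻¹ := by
  rw [Matrix.transpose_nonsing_inv]
  congr 1
  ext j k
  exact Ksym hK k.1 j.1

lemma subm_mul_inv (hK : K.PosDef) (G : Finset ι) :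
    subm K G * (subm K G)⁻¹ = 1 :=
  Matrix.mul_nonsing_inv _ (isUnit_iff_ne_zero.2 (subm_det_ne hK G))

-- the coefficient vector
def cvec (K : Matrix ι ι ℝ) (i : ι) (G : Finset ι) : ι → ℝ :=
  fun j => (if j = i then 1 else 0) -
    ext0 ((subm K G)⁻¹ *ᵥ fun k : G => K k.1 i) j

lemma wvec_eq (hK : K.PosDef) (i : ι) (G : Finset ι) :
    ((subm K G)⁻¹ *ᵥ fun k : G => K k.1 i) = ((subm K G)⁻¹ *ᵥ fun k : G => K i k.1) := by
  have : (fun k : G => K k.1 i) = fun k : G => K i k.1 := funext fun k => Ksym hK k.1 i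
  rw [this]

-- r ⬝ᵥ (M⁻¹ *ᵥ u) = w ⬝ᵥ u
lemma rdot_eq (hK : K.PosDef) (i : ι) (G : Finset ι) (u : G → ℝ) :
    (fun j : G => K i j.1) ⬝ᵥ ((subm K G)⁻¹ *ᵥ u) =
      ((subm K G)⁻¹ *ᵥ fun k : G => K k.1 i) ⬝ᵥ u := by
  rw [Matrix.dotProduct_mulVec, ← Matrix.mulVec_transpose, subm_inv_symm hK,
    wvec_eq hK]

lemma cvec_dot_sub (hK : K.PosDef) (μ : ι → ℝ) (i : ι) (G : Finset ι) (hiG : i ∉ G)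
    (x : ι → ℝ) :
    cvec K i G ⬝ᵥ (x - μ) = x i - condMean μ K i G x := by
  have hc : cvec K i G = (fun j => if j = i then (1:ℝ) else 0) -
      ext0 ((subm K G)⁻¹ *ᵥ fun k : G => K k.1 i) := rfl
  unfold condMean
  rw [hc, sub_dotProduct]
  have h1 : (fun j => if j = i then (1:ℝ) else 0) ⬝ᵥ (x - μ) = x i - μ i := by
    simp [dotProduct, ite_mul, Finset.sum_ite_eq']
  rw [h1, ext0_dot, rdot_eq hK]
  have : (fun j : G => (x - μ) j.1) = (fun j : G => x j.1 - μ j.1) := by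
    funext j; simp
  rw [this]
  ring

lemma cvec_quad (hK : K.PosDef) (i : ι) (G : Finset ι) (hiG : i ∉ G) :
    cvec K i G ⬝ᵥ (K *ᵥ cvec K i G) = condVar K i G := by
  set w : G → ℝ := (subm K G)⁻¹ *ᵥ fun k : G => K k.1 i with hw
  set e : ι → ℝ := fun j => if j = i then 1 else 0 with he
  set r' : G → ℝ := fun k => K k.1 i with hr'
  have hc : cvec K i G = e - ext0 w := rfl
  have hKe : K *ᵥ e = fun j => K j i := by
    funext j
    simp [he, Matrix.mulVec, dotProduct, mul_ite, Finset.sum_ite_eq']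
  have hedot : ∀ v : ι → ℝ, e ⬝ᵥ v = v i := by
    intro v
    simp [he, dotProduct, ite_mul, Finset.sum_ite_eq']
  have hMw : subm K G *ᵥ w = r' := by
    rw [hw, Matrix.mulVec_mulVec, subm_mul_inv hK, Matrix.one_mulVec]
  have hT1 : e ⬝ᵥ (K *ᵥ e) = K i i := by rw [hedot, hKe]
  have hT2 : e ⬝ᵥ (K *ᵥ ext0 w) = w ⬝ᵥ r' := by
    rw [hedot, mulVec_ext0, dotProduct_comm]
    congr 1
    funext k
    exact Ksym hK i k.1
  have hT3 : ext0 w ⬝ᵥ (K *ᵥ e) = w ⬝ᵥ r' := by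
    rw [ext0_dot, hKe]
  have hT4 : ext0 w ⬝ᵥ (K *ᵥ ext0 w) = w ⬝ᵥ r' := by
    rw [ext0_dot]
    have : (fun j : G => (K *ᵥ ext0 w) j.1) = subm K G *ᵥ w := by
      funext j
      rw [mulVec_ext0]
      rfl
    rw [this, hMw]
  have hcv : condVar K i G = K i i - w ⬝ᵥ r' := by
    unfold condVar
    rw [rdot_eq hK]
  rw [hc, Matrix.mulVec_sub, sub_dotProduct, dotProduct_sub,
    dotProduct_sub, hT1, hT2, hT3, hT4, hcv]
  ring

lemma condVar_eq_quad (hK : K.PosDef) (i : ι) (G : Finset ι) (hiG : i ∉ G) :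
    condVar K i G = cvec K i G ⬝ᵥ (K *ᵥ cvec K i G) := (cvec_quad hK i G hiG).symm

lemma condVar_pos (hK : K.PosDef) (i : ι) (G : Finset ι) (hiG : i ∉ G) :
    0 < condVar K i G := by
  rw [condVar_eq_quad hK i G hiG]
  have hc : cvec K i G ≠ 0 := by
    intro h
    have := congrFun h i
    simp [cvec, ext0, hiG] at this
  have := hK.dotProduct_mulVec_pos hc
  simpa using this

end posdef



variable {N : ℕ} {K : Matrix (Fin N) (Fin N) ℝ}


namespace SqrtFacts
open scoped MatrixOrder
variable (hK : K.PosDef)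

def S (hK : K.PosDef) : Matrix (Fin N) (Fin N) ℝ := CFC.sqrt K

lemma SS : S hK * S hK = K := CFC.sqrt_mul_sqrt_self K hK.posSemidef.nonneg

lemma Ssym : (S hK)ᵀ = S hK := by
  have h := (Matrix.nonneg_iff_posSemidef.mp (CFC.sqrt_nonneg K)).1
  ext j k
  have := congrFun (congrFun h.eq j) k
  simpa [S, Matrix.conjTranspose_apply] using this

lemma detS_nonneg : 0 ≤ (S hK).det := by
  have h := (Matrix.nonneg_iff_posSemidef.mp (CFC.sqrt_nonneg K))
  rw [show (S hK).det = _ from h.1.det_eq_prod_eigenvalues]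
  exact Finset.prod_nonneg fun i _ => h.eigenvalues_nonneg i

lemma detK_eq : K.det = (S hK).det * (S hK).det := by
  conv_lhs => rw [← SS hK]
  exact Matrix.det_mul _ _

lemma detS_pos : 0 < (S hK).det := by
  rcases lt_or_eq_of_le (detS_nonneg hK) with h | h
  · exact h
  · exfalso
    have := hK.det_pos
    rw [detK_eq hK, ← h] at this
    simp at this

lemma detS_eq_sqrt : (S hK).det = Real.sqrt K.det := by
  rw [detK_eq hK, ← sq, Real.sqrt_sq (detS_nonneg hK)]

lemma S_inv_mul : (S hK)⁻¹ * S hK = 1 :=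
  Matrix.nonsing_inv_mul _ (isUnit_iff_ne_zero.2 (detS_pos hK).ne')

lemma S_mul_inv : S hK * (S hK)⁻¹ = 1 :=
  Matrix.mul_nonsing_inv _ (isUnit_iff_ne_zero.2 (detS_pos hK).ne')

lemma quad_S (y : Fin N → ℝ) :
    (S hK *ᵥ y) ⬝ᵥ (K⁻¹ *ᵥ (S hK *ᵥ y)) = y ⬝ᵥ y := by
  have haux : ∀ A : Matrix (Fin N) (Fin N) ℝ, A * A = K → A⁻¹ * A = 1 →
      K⁻¹ * A = A⁻¹ := by
    intro A h1 h2
    rw [← h1, Matrix.mul_inv_rev, Matrix.mul_assoc, h2, Matrix.mul_one]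
  have h0 : K⁻¹ * S hK = (S hK)⁻¹ := haux _ (SS hK) (S_inv_mul hK)
  have h1 : K⁻¹ *ᵥ (S hK *ᵥ y) = (S hK)⁻¹ *ᵥ y := by
    rw [Matrix.mulVec_mulVec, h0]
  rw [h1, Matrix.dotProduct_mulVec, ← Matrix.mulVec_transpose,
    Matrix.transpose_nonsing_inv, Ssym hK, Matrix.mulVec_mulVec, S_inv_mul hK,
    Matrix.one_mulVec]

lemma dot_S (c y : Fin N → ℝ) : c ⬝ᵥ (S hK *ᵥ y) = (S hK *ᵥ c) ⬝ᵥ y := by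
  rw [Matrix.dotProduct_mulVec, ← Matrix.mulVec_transpose, Ssym hK]

lemma normsq_S (c : Fin N → ℝ) : (S hK *ᵥ c) ⬝ᵥ (S hK *ᵥ c) = c ⬝ᵥ (K *ᵥ c) := by
  rw [Matrix.dotProduct_mulVec, ← Matrix.mulVec_transpose, Ssym hK,
    Matrix.mulVec_mulVec, SS hK, dotProduct_comm]

lemma sqrt_2pi_pow : Real.sqrt ((2*π)^N) = (Real.sqrt (2*π))^N := by
  induction N with
  | zero => simp
  | succ n ih => rw [pow_succ, pow_succ, Real.sqrt_mul (by positivity), ih]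

lemma density_transform (μ : Fin N → ℝ) (y : Fin N → ℝ) :
    gaussDensity μ K (μ + S hK *ᵥ y) = ((S hK).det)⁻¹ * Phi y := by
  unfold gaussDensity Phi phi
  have hsub : (μ + S hK *ᵥ y) - μ = S hK *ᵥ y := by
    funext j; simp
  rw [hsub, quad_S hK]
  rw [Real.sqrt_mul (by positivity) K.det, Fintype.card_fin, sqrt_2pi_pow,
    ← detS_eq_sqrt hK]
  rw [Finset.prod_mul_distrib, Finset.prod_const, ← Real.exp_sum]
  rw [mul_inv]
  have hsum : ∑ j, -(y j)^2/2 = -(y ⬝ᵥ y)/2 :=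
    calc ∑ j, -(y j)^2/2 = ∑ j, -(y j * y j)/2 := Finset.sum_congr rfl fun j _ => by ring
      _ = (∑ j, -(y j * y j))/2 := (Finset.sum_div _ _ _).symm
      _ = -(∑ j, y j * y j)/2 := by rw [Finset.sum_neg_distrib]
      _ = -(y ⬝ᵥ y)/2 := rfl
  rw [hsum, Finset.card_univ, Fintype.card_fin, ← inv_pow]
  ring

end SqrtFacts


lemma cont_condMean (μ : ι → ℝ) (K : Matrix ι ι ℝ) (i : ι) (G : Finset ι) :
    Continuous (condMean μ K i G) := by
  unfold condMean dotProduct Matrix.mulVec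
  apply continuous_const.add
  apply continuous_finset_sum
  intro j _
  apply Continuous.mul continuous_const
  apply continuous_finset_sum
  intro k _
  exact continuous_const.mul ((continuous_apply (k.1 : ι)).sub continuous_const)

lemma cont_vecchia (μ : ι → ℝ) (K : Matrix ι ι ℝ) (g : ι → Finset ι) :
    Continuous (vecchia μ K g) := by
  unfold vecchia
  apply continuous_finset_prod
  intro i _
  unfold condDens gauss1
  exact continuous_const.mul
    (Real.continuous_exp.comp (((((continuous_apply i).sub (cont_condMean μ K i (g i))).pow 2).neg).div_const _))

lemma cont_gaussDensity (μ : ι → ℝ) (K : Matrix ι ι ℝ) :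
    Continuous (gaussDensity μ K) := by
  unfold gaussDensity dotProduct Matrix.mulVec
  apply continuous_const.mul
  apply Real.continuous_exp.comp
  apply Continuous.div_const
  apply Continuous.neg
  apply continuous_finset_sum
  intro j _
  refine Continuous.mul ?_ ?_
  · exact (continuous_apply j).sub continuous_const
  · apply continuous_finset_sum
    intro k _
    exact continuous_const.mul ((continuous_apply k).sub continuous_const)

end VGaux

/-- The expected negative log-density of a Vecchia approximation under the true Gaussian law:
`−2 E[log f̂(x)] = ∑ᵢ log Var(xᵢ | x_{g(i)}) + N + N log(2π)`. -/
theorem expected_log_vecchia_density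
    {N : ℕ} (μ : Fin N → ℝ) (K : Matrix (Fin N) (Fin N) ℝ) (hK : K.PosDef)
    (g : Fin N → Finset (Fin N)) (hg : ∀ i, g i ⊆ Finset.Iio i) :
    (-2) * ∫ x : Fin N → ℝ, gaussDensity μ K x * Real.log (vecchia μ K g x) =
      (∑ i, Real.log (condVar K i (g i))) + N + N * Real.log (2 * π) := by
  classical
  have hig : ∀ i, i ∉ g i := by
    intro i hi
    have := hg i hi
    simp [Finset.mem_Iio] at this
  have hvpos : ∀ i, 0 < condVar K i (g i) := fun i => condVar_pos hK i (g i) (hig i)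
  set S := SqrtFacts.S hK with hS
  set c : Fin N → (Fin N → ℝ) := fun i => cvec K i (g i) with hc
  set d : Fin N → (Fin N → ℝ) := fun i => S *ᵥ c i with hd
  have hdd : ∀ i, d i ⬝ᵥ d i = condVar K i (g i) := by
    intro i
    rw [hd]
    rw [SqrtFacts.normsq_S hK (c i), hc]
    exact cvec_quad hK i (g i) (hig i)
  set L : Fin N → ℝ := fun i => Real.log ((Real.sqrt (2 * π * condVar K i (g i)))⁻¹) with hL
  set B : Fin N → ℝ := fun i => -(2 * condVar K i (g i))⁻¹ with hB
  -- pointwise identity after change of variables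
  have hpt : ∀ y : Fin N → ℝ,
      gaussDensity μ K (μ + S *ᵥ y) * Real.log (vecchia μ K g (μ + S *ᵥ y)) =
        (S.det)⁻¹ * ∑ i, (L i * Phi y + B i * (Phi y * (d i ⬝ᵥ y) ^ 2)) := by
    intro y
    rw [SqrtFacts.density_transform hK μ y]
    have hlog : Real.log (vecchia μ K g (μ + S *ᵥ y)) =
        ∑ i, (L i + B i * (d i ⬝ᵥ y) ^ 2) := by
      unfold vecchia
      rw [Real.log_prod]
      · refine Finset.sum_congr rfl fun i _ => ?_
        unfold condDens gauss1
        have hv := hvpos i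
        rw [Real.log_mul (inv_ne_zero (Real.sqrt_pos.2 (by positivity)).ne')
          (Real.exp_ne_zero _), Real.log_exp]
        have hx : (μ + S *ᵥ y) i - condMean μ K i (g i) (μ + S *ᵥ y) = d i ⬝ᵥ y := by
          rw [← cvec_dot_sub hK μ i (g i) (hig i) _]
          have hsub : (μ + S *ᵥ y) - μ = S *ᵥ y := by funext j; simp
          rw [hsub, SqrtFacts.dot_S hK]
        rw [hx, hL, hB]
        have : -(d i ⬝ᵥ y) ^ 2 / (2 * condVar K i (g i)) =
            -(2 * condVar K i (g i))⁻¹ * (d i ⬝ᵥ y) ^ 2 := by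
          field_simp
        rw [this]
      · intro i _
        unfold condDens gauss1
        have hv := hvpos i
        positivity
    rw [hlog, mul_assoc, Finset.mul_sum]
    congr 1
    refine Finset.sum_congr rfl fun i _ => by ring
  have hmeasF : Measurable (fun x => gaussDensity μ K x * Real.log (vecchia μ K g x)) :=
    (cont_gaussDensity μ K).measurable.mul
      (Real.measurable_log.comp (cont_vecchia μ K g).measurable)
  have hdetpos := SqrtFacts.detS_pos hK
  have hCV := integral_comp_affine (S := S) hdetpos.ne' μ hmeasF
  rw [hCV]
  have hint : ∀ i : Fin N, Integrable
      (fun y : Fin N → ℝ => L i * Phi y + B i * (Phi y * (d i ⬝ᵥ y) ^ 2)) :=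
    fun i => (integrable_Phi.const_mul _).add ((integrable_Phi_sq_dot (d i)).const_mul _)
  have hI : ∫ y : Fin N → ℝ,
      gaussDensity μ K (μ + S *ᵥ y) * Real.log (vecchia μ K g (μ + S *ᵥ y)) =
      (S.det)⁻¹ * ∑ i, (L i - 1/2) := by
    rw [show (fun y : Fin N → ℝ =>
        gaussDensity μ K (μ + S *ᵥ y) * Real.log (vecchia μ K g (μ + S *ᵥ y))) =
        (fun y => (S.det)⁻¹ * ∑ i, (L i * Phi y + B i * (Phi y * (d i ⬝ᵥ y) ^ 2)))
        from funext hpt]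
    rw [integral_const_mul]
    congr 1
    rw [integral_finset_sum _ (fun i _ => hint i)]
    refine Finset.sum_congr rfl fun i _ => ?_
    rw [integral_add (integrable_Phi.const_mul _) ((integrable_Phi_sq_dot (d i)).const_mul _),
      integral_const_mul, integral_const_mul, int_Phi, int_Phi_sq_dot, hdd i, hB]
    have hv := (hvpos i).ne'
    field_simp
    ring
  rw [hI, abs_of_pos hdetpos]
  rw [show S.det * ((S.det)⁻¹ * ∑ i, (L i - 1/2)) = ∑ i, (L i - 1/2) by
    rw [← mul_assoc, mul_inv_cancel₀ (a := S.det) hdetpos.ne', one_mul]]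
  have hLval : ∀ i, L i = -(1/2) * (Real.log (2*π) + Real.log (condVar K i (g i))) := by
    intro i
    simp only [hL]
    have hv := hvpos i
    rw [Real.log_inv, Real.log_sqrt (by positivity),
      Real.log_mul (by positivity) hv.ne']
    ring
  calc (-2) * ∑ i, (L i - 1/2)
      = ∑ i : Fin N, (Real.log (condVar K i (g i)) + (1 + Real.log (2*π))) := by
        rw [Finset.mul_sum]
        refine Finset.sum_congr rfl fun i _ => ?_
        rw [hLval i]
        ring
    _ = (∑ i, Real.log (condVar K i (g i))) + N + N * Real.log (2 * π) := by
        rw [Finset.sum_add_distrib, Finset.sum_const, Finset.card_univ, Fintype.card_fin]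
        ring

end
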